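/- Let 1 ≤ n < α, p = 2n/(n+α), q = 2n/(n−α). Let F ∈ L^1(𝕊ⁿ) be a nonnegative function with ‖F‖_{L^p(𝕊ⁿ)} = 1. Then for every ε > 0 there exists a nonnegative continuous function G on 𝕊ⁿ such that ‖F − G‖_{L^p(𝕊ⁿ)} + | ‖Ĩ_α F‖_{L^q(𝕊ⁿ)} − ‖Ĩ_α G‖_{L^q(𝕊ⁿ)} | < ε. -/

import Mathlib

open MeasureTheory ENNReal Metric
open scoped Pointwise Topology

/-- The standard surface measure on the unit sphere `𝕊ⁿ ⊆ ℝ^(n+1)`. -/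
noncomputable def sphereMeasure (n : ℕ) :
    Measure (sphere (0 : EuclideanSpace ℝ (Fin (n + 1))) 1) :=
  (volume : Measure (EuclideanSpace ℝ (Fin (n + 1)))).toSphere

/-- The singular integral operator `Ĩ_α F(ξ) = ∫_{𝕊ⁿ} F(η) |ξ-η|^(α-n) dη` on the sphere,
where `|ξ-η|` is the chordal distance in `ℝ^(n+1)`, valued in `ℝ≥0∞`. -/
noncomputable def sphereRiesz (n : ℕ) (α : ℝ)
    (F : sphere (0 : EuclideanSpace ℝ (Fin (n + 1))) 1 → ℝ)
    (ξ : sphere (0 : EuclideanSpace ℝ (Fin (n + 1))) 1) : ℝ≥0∞ :=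
  ∫⁻ η, ENNReal.ofReal (F η *
    dist (ξ : EuclideanSpace ℝ (Fin (n + 1))) (η : EuclideanSpace ℝ (Fin (n + 1))) ^ (α - n))
    ∂(sphereMeasure n)

namespace DensityLemmaAux

instance sphereMeasure_finite (n : ℕ) : IsFiniteMeasure (sphereMeasure n) := by
  unfold sphereMeasure; infer_instance

lemma sphereMeasure_singleton (n : ℕ) (hn : 1 ≤ n)
    (ξ : sphere (0 : EuclideanSpace ℝ (Fin (n + 1))) 1) : sphereMeasure n {ξ} = 0 := by
  have happ := Measure.toSphere_apply' (E := EuclideanSpace ℝ (Fin (n+1))) (μ := volume)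
    (measurableSet_singleton ξ)
  rw [sphereMeasure, happ]
  have h0 : volume (Set.Ioo (0:ℝ) 1 • ((↑) '' ({ξ} : Set _) :
      Set (EuclideanSpace ℝ (Fin (n + 1))))) = 0 := by
    refine measure_mono_null ?_ (Measure.addHaar_submodule volume
      (Submodule.span ℝ {(ξ : EuclideanSpace ℝ (Fin (n + 1)))}) ?_)
    · rintro y ⟨t, ht, x, hx, rfl⟩
      simp only [Set.image_singleton, Set.mem_singleton_iff] at hx
      subst hx
      exact Submodule.smul_mem _ t (Submodule.mem_span_singleton_self _)
    · intro h
      have hξ0 : (ξ : EuclideanSpace ℝ (Fin (n + 1))) ≠ 0 := by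
        have h2 := ξ.2
        simp only [mem_sphere_iff_norm, sub_zero] at h2
        intro h'; rw [h'] at h2; simp at h2
      have h1 := finrank_span_singleton (K := ℝ) hξ0
      rw [h, finrank_top] at h1
      rw [finrank_euclideanSpace_fin] at h1
      omega
  rw [h0, mul_zero]

lemma meas_rpow {β : Type*} [MeasurableSpace β] {f : β → ℝ} (hf : Measurable f) (c : ℝ) :
    Measurable fun x => f x ^ c := by
  measurability

lemma dist_le_two {n : ℕ} (ξ η : sphere (0 : EuclideanSpace ℝ (Fin (n + 1))) 1) :
    dist (ξ : EuclideanSpace ℝ (Fin (n + 1))) (η : EuclideanSpace ℝ (Fin (n + 1))) ≤ 2 := by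
  have h1 : ‖(ξ : EuclideanSpace ℝ (Fin (n + 1)))‖ = 1 := norm_eq_of_mem_sphere ξ
  have h2 : ‖(η : EuclideanSpace ℝ (Fin (n + 1)))‖ = 1 := norm_eq_of_mem_sphere η
  calc dist (ξ : EuclideanSpace ℝ (Fin (n + 1))) (η : EuclideanSpace ℝ (Fin (n + 1)))
      ≤ ‖(ξ : EuclideanSpace ℝ (Fin (n + 1)))‖ + ‖(η : EuclideanSpace ℝ (Fin (n + 1)))‖ :=
        dist_le_norm_add_norm _ _
    _ ≤ 2 := by rw [h1, h2]; norm_num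

lemma kernel_measurable {n : ℕ} {α : ℝ} {F : sphere (0 : EuclideanSpace ℝ (Fin (n + 1))) 1 → ℝ}
    (hF : Measurable F) :
    Measurable (Function.uncurry fun ξ η : sphere (0 : EuclideanSpace ℝ (Fin (n + 1))) 1 =>
      ENNReal.ofReal (F η * dist (ξ : EuclideanSpace ℝ (Fin (n + 1)))
        (η : EuclideanSpace ℝ (Fin (n + 1))) ^ (α - n))) := by
  apply Measurable.ennreal_ofReal
  apply Measurable.mul
  · exact hF.comp measurable_snd
  · have hd : Continuous fun p : sphere (0 : EuclideanSpace ℝ (Fin (n + 1))) 1 ×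
        sphere (0 : EuclideanSpace ℝ (Fin (n + 1))) 1 =>
        dist (p.1 : EuclideanSpace ℝ (Fin (n+1))) (p.2 : EuclideanSpace ℝ (Fin (n+1))) :=
      (continuous_subtype_val.comp continuous_fst).dist
        (continuous_subtype_val.comp continuous_snd)
    exact meas_rpow hd.measurable _

lemma kernel_slice_measurable {n : ℕ} {α : ℝ}
    {F : sphere (0 : EuclideanSpace ℝ (Fin (n + 1))) 1 → ℝ} (hF : Measurable F)
    (ξ : sphere (0 : EuclideanSpace ℝ (Fin (n + 1))) 1) :
    Measurable fun η : sphere (0 : EuclideanSpace ℝ (Fin (n + 1))) 1 =>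
      ENNReal.ofReal (F η * dist (ξ : EuclideanSpace ℝ (Fin (n + 1)))
        (η : EuclideanSpace ℝ (Fin (n + 1))) ^ (α - n)) :=
  (kernel_measurable (α := α) hF).comp (measurable_const.prodMk measurable_id)

lemma riesz_measurable {n : ℕ} {α : ℝ} {F : sphere (0 : EuclideanSpace ℝ (Fin (n + 1))) 1 → ℝ}
    (hF : Measurable F) : Measurable (sphereRiesz n α F) :=
  Measurable.lintegral_prod_right' (kernel_measurable (α := α) hF)

lemma riesz_le {n : ℕ} {α : ℝ} (hβ : 0 < α - n)
    {F : sphere (0 : EuclideanSpace ℝ (Fin (n + 1))) 1 → ℝ} (hFpos : ∀ η, 0 ≤ F η)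
    (ξ : sphere (0 : EuclideanSpace ℝ (Fin (n + 1))) 1) :
    sphereRiesz n α F ξ ≤
      ENNReal.ofReal (2 ^ (α - n)) * ∫⁻ η, ENNReal.ofReal (F η) ∂(sphereMeasure n) := by
  rw [sphereRiesz, ← lintegral_const_mul' _ _ ENNReal.ofReal_ne_top]
  refine lintegral_mono fun η => ?_
  rw [← ENNReal.ofReal_mul (by positivity)]
  refine ENNReal.ofReal_le_ofReal ?_
  rw [mul_comm (2 ^ (α - n))]
  exact mul_le_mul_of_nonneg_left
    (Real.rpow_le_rpow dist_nonneg (dist_le_two ξ η) hβ.le) (hFpos η)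

lemma riesz_continuous {n : ℕ} {α : ℝ} (hβ : 0 < α - n)
    {F : sphere (0 : EuclideanSpace ℝ (Fin (n + 1))) 1 → ℝ} (hF : Measurable F)
    (hFpos : ∀ η, 0 ≤ F η)
    (hI1 : (∫⁻ η, ENNReal.ofReal (F η) ∂(sphereMeasure n)) ≠ ⊤) :
    Continuous (sphereRiesz n α F) := by
  rw [continuous_iff_continuousAt]
  intro ξ
  unfold ContinuousAt sphereRiesz
  refine tendsto_lintegral_filter_of_dominated_convergence
    (fun η => ENNReal.ofReal (2 ^ (α - n)) * ENNReal.ofReal (F η)) ?_ ?_ ?_ ?_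
  · exact Filter.Eventually.of_forall fun ξ' => kernel_slice_measurable hF ξ'
  · refine Filter.Eventually.of_forall fun ξ' => Filter.Eventually.of_forall fun η => ?_
    rw [← ENNReal.ofReal_mul (by positivity)]
    refine ENNReal.ofReal_le_ofReal ?_
    rw [mul_comm (2 ^ (α - n))]
    exact mul_le_mul_of_nonneg_left
      (Real.rpow_le_rpow dist_nonneg (dist_le_two ξ' η) hβ.le) (hFpos η)
  · rw [lintegral_const_mul' _ _ ENNReal.ofReal_ne_top]
    exact ENNReal.mul_ne_top ENNReal.ofReal_ne_top hI1
  · refine Filter.Eventually.of_forall fun η => ?_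
    have hc : Continuous fun ξ' : sphere (0 : EuclideanSpace ℝ (Fin (n + 1))) 1 =>
        ENNReal.ofReal (F η * dist (ξ' : EuclideanSpace ℝ (Fin (n + 1)))
          (η : EuclideanSpace ℝ (Fin (n + 1))) ^ (α - n)) := by
      refine ENNReal.continuous_ofReal.comp (continuous_const.mul ?_)
      exact (continuous_subtype_val.dist continuous_const).rpow_const fun x => Or.inr hβ.le
    exact hc.tendsto ξ

lemma riesz_pos {n : ℕ} (hn : 1 ≤ n) {α : ℝ} (hβ : 0 < α - n)
    {F : sphere (0 : EuclideanSpace ℝ (Fin (n + 1))) 1 → ℝ} (hF : Measurable F)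
    (hFpos : ∀ η, 0 ≤ F η) (hne : ¬ F =ᵐ[sphereMeasure n] 0)
    (ξ : sphere (0 : EuclideanSpace ℝ (Fin (n + 1))) 1) :
    0 < sphereRiesz n α F ξ := by
  rw [pos_iff_ne_zero]
  intro h0
  apply hne
  rw [sphereRiesz, lintegral_eq_zero_iff (kernel_slice_measurable hF ξ)] at h0
  have hsing : ∀ᵐ η ∂(sphereMeasure n), η ≠ ξ := by
    rw [MeasureTheory.ae_iff]
    have : {η : sphere (0 : EuclideanSpace ℝ (Fin (n + 1))) 1 | ¬ η ≠ ξ} = {ξ} := by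
      ext η; simp
    rw [this]
    exact sphereMeasure_singleton n hn ξ
  filter_upwards [h0, hsing] with η h1 h2
  have hd : 0 < dist (ξ : EuclideanSpace ℝ (Fin (n + 1))) (η : EuclideanSpace ℝ (Fin (n + 1))) :=
    dist_pos.2 fun h => h2 (Subtype.coe_injective h).symm
  have hdr : 0 < dist (ξ : EuclideanSpace ℝ (Fin (n + 1)))
      (η : EuclideanSpace ℝ (Fin (n + 1))) ^ (α - n) := Real.rpow_pos_of_pos hd _
  have h3 : F η * dist (ξ : EuclideanSpace ℝ (Fin (n + 1)))
      (η : EuclideanSpace ℝ (Fin (n + 1))) ^ (α - n) ≤ 0 := by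
    simpa only [Pi.zero_apply, ENNReal.ofReal_eq_zero] using h1
  have h4 : F η ≤ 0 := by nlinarith [hFpos η]
  exact le_antisymm h4 (hFpos η)

lemma riesz_le_add {n : ℕ} {α : ℝ} (hβ : 0 < α - n)
    {F G : sphere (0 : EuclideanSpace ℝ (Fin (n + 1))) 1 → ℝ} (hG : Measurable G)
    (ξ : sphere (0 : EuclideanSpace ℝ (Fin (n + 1))) 1) :
    sphereRiesz n α F ξ ≤ sphereRiesz n α G ξ +
      ENNReal.ofReal (2 ^ (α - n)) * ∫⁻ η, ENNReal.ofReal |F η - G η| ∂(sphereMeasure n) := by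
  have hpt : ∀ η : sphere (0 : EuclideanSpace ℝ (Fin (n + 1))) 1,
      ENNReal.ofReal (F η * dist (ξ : EuclideanSpace ℝ (Fin (n + 1)))
        (η : EuclideanSpace ℝ (Fin (n + 1))) ^ (α - n)) ≤
      ENNReal.ofReal (G η * dist (ξ : EuclideanSpace ℝ (Fin (n + 1)))
        (η : EuclideanSpace ℝ (Fin (n + 1))) ^ (α - n)) +
      ENNReal.ofReal (2 ^ (α - n)) * ENNReal.ofReal |F η - G η| := by
    intro η
    set d := dist (ξ : EuclideanSpace ℝ (Fin (n + 1))) (η : EuclideanSpace ℝ (Fin (n + 1)))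
    have hd0 : 0 ≤ d ^ (α - n) := Real.rpow_nonneg dist_nonneg _
    have hd2 : d ^ (α - n) ≤ 2 ^ (α - n) :=
      Real.rpow_le_rpow dist_nonneg (dist_le_two ξ η) hβ.le
    have h1 : F η * d ^ (α - n) ≤ G η * d ^ (α - n) + 2 ^ (α - n) * |F η - G η| := by
      have h2 : F η ≤ G η + |F η - G η| := by
        have := le_abs_self (F η - G η); linarith
      have h3 : F η * d ^ (α - n) ≤ (G η + |F η - G η|) * d ^ (α - n) :=
        mul_le_mul_of_nonneg_right h2 hd0
      have h4 : |F η - G η| * d ^ (α - n) ≤ |F η - G η| * 2 ^ (α - n) :=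
        mul_le_mul_of_nonneg_left hd2 (abs_nonneg _)
      nlinarith
    calc ENNReal.ofReal (F η * d ^ (α - n))
        ≤ ENNReal.ofReal (G η * d ^ (α - n) + 2 ^ (α - n) * |F η - G η|) :=
          ENNReal.ofReal_le_ofReal h1
      _ ≤ ENNReal.ofReal (G η * d ^ (α - n)) + ENNReal.ofReal (2 ^ (α - n) * |F η - G η|) :=
          ENNReal.ofReal_add_le
      _ = ENNReal.ofReal (G η * d ^ (α - n)) +
          ENNReal.ofReal (2 ^ (α - n)) * ENNReal.ofReal |F η - G η| := by
          congr 1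
          exact ENNReal.ofReal_mul (Real.rpow_nonneg (by norm_num) _)
  calc sphereRiesz n α F ξ
      ≤ ∫⁻ η, (ENNReal.ofReal (G η * dist (ξ : EuclideanSpace ℝ (Fin (n + 1)))
          (η : EuclideanSpace ℝ (Fin (n + 1))) ^ (α - n)) +
          ENNReal.ofReal (2 ^ (α - n)) * ENNReal.ofReal |F η - G η|) ∂(sphereMeasure n) :=
        lintegral_mono hpt
    _ = sphereRiesz n α G ξ +
        ∫⁻ η, ENNReal.ofReal (2 ^ (α - n)) * ENNReal.ofReal |F η - G η| ∂(sphereMeasure n) :=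
        lintegral_add_left (kernel_slice_measurable hG ξ) _
    _ = sphereRiesz n α G ξ +
        ENNReal.ofReal (2 ^ (α - n)) * ∫⁻ η, ENNReal.ofReal |F η - G η| ∂(sphereMeasure n) := by
        rw [lintegral_const_mul' _ _ ENNReal.ofReal_ne_top]

end DensityLemmaAux

open DensityLemmaAux Filter

/-- **Density Lemma** (Lemma 3.1): for `1 ≤ n < α`, `p = 2n/(n+α)`, `q = 2n/(n-α)`,
a nonnegative `F ∈ L^1(𝕊ⁿ)` with `‖F‖_{L^p(𝕊ⁿ)} = 1`, and any `ε > 0`, there is a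
nonnegative continuous `G` on `𝕊ⁿ` with
`‖F - G‖_{L^p(𝕊ⁿ)} + | ‖Ĩ_α F‖_{L^q(𝕊ⁿ)} - ‖Ĩ_α G‖_{L^q(𝕊ⁿ)} | < ε`. -/
theorem density_lemma_sphere (n : ℕ) (hn : 1 ≤ n) (α p q : ℝ)
    (hα : (n : ℝ) < α)
    (hp : p = 2 * n / ((n : ℝ) + α)) (hq : q = 2 * n / ((n : ℝ) - α))
    (F : sphere (0 : EuclideanSpace ℝ (Fin (n + 1))) 1 → ℝ)
    (hF : Measurable F) (hFpos : ∀ ξ, 0 ≤ F ξ)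
    (hFL1 : Integrable F (sphereMeasure n))
    (hFnorm : (∫ ξ, |F ξ| ^ p ∂(sphereMeasure n)) ^ (1 / p) = 1)
    (ε : ℝ) (hε : 0 < ε) :
    ∃ G : sphere (0 : EuclideanSpace ℝ (Fin (n + 1))) 1 → ℝ,
      Continuous G ∧ (∀ ξ, 0 ≤ G ξ) ∧
      (∫ ξ, |F ξ - G ξ| ^ p ∂(sphereMeasure n)) ^ (1 / p) +
          |((∫⁻ ξ, (sphereRiesz n α F ξ) ^ q ∂(sphereMeasure n)) ^ (1 / q)).toReal -
            ((∫⁻ ξ, (sphereRiesz n α G ξ) ^ q ∂(sphereMeasure n)) ^ (1 / q)).toReal| < ε := by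
  classical
  haveI : CompactSpace (sphere (0 : EuclideanSpace ℝ (Fin (n + 1))) 1) :=
    isCompact_iff_compactSpace.mp (isCompact_sphere _ _)
  haveI : Nonempty (sphere (0 : EuclideanSpace ℝ (Fin (n + 1))) 1) :=
    (NormedSpace.sphere_nonempty.mpr zero_le_one).to_subtype
  have hn0 : (0:ℝ) < n := by exact_mod_cast Nat.lt_of_lt_of_le Nat.zero_lt_one hn
  have hβ : 0 < α - n := sub_pos.2 hα
  have hp0 : 0 < p := by rw [hp]; exact div_pos (by linarith) (by linarith)
  have hp1 : p < 1 := by rw [hp, div_lt_one (by linarith)]; linarith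
  have hq0 : q < 0 := by rw [hq]; exact div_neg_of_pos_of_neg (by linarith) (by linarith)
  set μ := sphereMeasure n with hμdef
  -- F is not a.e. zero
  have hFne : ¬ F =ᵐ[μ] 0 := by
    intro h
    have h2 : (fun ξ => |F ξ| ^ p) =ᵐ[μ] 0 := by
      filter_upwards [h] with ξ hξ
      simp only [Pi.zero_apply] at hξ ⊢
      rw [hξ, abs_zero, Real.zero_rpow hp0.ne']
    have h3 : ∫ ξ, |F ξ| ^ p ∂μ = 0 := by
      rw [integral_congr_ae h2]; simp
    rw [h3, Real.zero_rpow (by positivity : (1/p:ℝ) ≠ 0)] at hFnorm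
    exact zero_ne_one hFnorm
  have hμne : μ ≠ 0 := by
    intro h0
    apply hFne
    rw [Filter.EventuallyEq, h0]
    simp
  have hV0 : 0 < μ Set.univ := MeasureTheory.Measure.measure_univ_pos.mpr hμne
  have hVtop : μ Set.univ ≠ ⊤ := measure_ne_top μ _
  -- the L¹ mass of F
  set I1 : ℝ≥0∞ := ∫⁻ η, ENNReal.ofReal (F η) ∂μ with hI1def
  have hI1top : I1 ≠ ⊤ := by
    refine ne_top_of_le_ne_top hFL1.2.ne (lintegral_mono fun η => ?_)
    rw [Real.enorm_eq_ofReal_abs]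
    exact ENNReal.ofReal_le_ofReal (le_abs_self _)
  set Cβ : ℝ≥0∞ := ENNReal.ofReal (2 ^ (α - n)) with hCβdef
  have hMtop : Cβ * I1 ≠ ⊤ := ENNReal.mul_ne_top ENNReal.ofReal_ne_top hI1top
  have hup : ∀ ξ, sphereRiesz n α F ξ ≤ Cβ * I1 := fun ξ => riesz_le hβ hFpos ξ
  have hFfin : ∀ ξ, sphereRiesz n α F ξ ≠ ⊤ := fun ξ => ne_top_of_le_ne_top hMtop (hup ξ)
  -- minimum of the Riesz potential of F
  have hcont : Continuous (sphereRiesz n α F) := riesz_continuous hβ hF hFpos hI1top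
  obtain ⟨ξ0, -, hξ0⟩ := IsCompact.exists_isMinOn isCompact_univ
    Set.univ_nonempty hcont.continuousOn
  set m := sphereRiesz n α F ξ0 with hmdef
  have hm0 : 0 < m := riesz_pos hn hβ hF hFpos hFne ξ0
  have hmtop : m ≠ ⊤ := hFfin ξ0
  have hmlb : ∀ ξ, m ≤ sphereRiesz n α F ξ := fun ξ => hξ0 (Set.mem_univ ξ)
  set mr := m.toReal with hmrdef
  have hmr0 : 0 < mr := ENNReal.toReal_pos hm0.ne' hmtop
  set MR := (Cβ * I1).toReal with hMRdef
  set h : sphere (0 : EuclideanSpace ℝ (Fin (n + 1))) 1 → ℝ :=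
    fun ξ => (sphereRiesz n α F ξ).toReal with hhdef
  have hhub : ∀ ξ, h ξ ≤ MR := fun ξ => ENNReal.toReal_mono hMtop (hup ξ)
  have hhlb : ∀ ξ, mr ≤ h ξ := fun ξ =>
    (ENNReal.toReal_le_toReal hmtop (hFfin ξ)).mpr (hmlb ξ)
  have hMR0 : 0 < MR := lt_of_lt_of_le hmr0 (le_trans (hhlb ξ0) (hhub ξ0))
  -- choose approximating continuous functions
  have hex : ∀ k : ℕ, ∃ g : BoundedContinuousFunction
      (sphere (0 : EuclideanSpace ℝ (Fin (n + 1))) 1) ℝ,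
      (∫⁻ x, ‖F x - g x‖₊ ∂μ) ≤ ENNReal.ofReal (1/(k+1)) ∧ Integrable g μ := fun k =>
    hFL1.exists_boundedContinuous_lintegral_sub_le
      (ENNReal.ofReal_pos.2 (by positivity)).ne'
  choose g hg hgint using hex
  set G : ℕ → sphere (0 : EuclideanSpace ℝ (Fin (n + 1))) 1 → ℝ :=
    fun k ξ => max (g k ξ) 0 with hGdef
  have hGcont : ∀ k, Continuous (G k) := fun k => ((g k).continuous.max continuous_const)
  have hGpos : ∀ k ξ, 0 ≤ G k ξ := fun k ξ => le_max_right _ _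
  have hGmeas : ∀ k, Measurable (G k) := fun k => (hGcont k).measurable
  set δ : ℕ → ℝ := fun k => 1/(k+1) with hδdef
  have hδ0 : ∀ k, 0 < δ k := fun k => by positivity
  have hδlim : Tendsto δ atTop (𝓝 0) := tendsto_one_div_add_atTop_nhds_zero_nat
  have hDk : ∀ k, (∫⁻ η, ENNReal.ofReal |F η - G k η| ∂μ) ≤ ENNReal.ofReal (δ k) := by
    intro k
    refine le_trans (lintegral_mono fun η => ?_) (hg k)
    have h1 : |F η - G k η| ≤ |F η - g k η| := by
      have h2 := abs_max_sub_max_le_abs (F η) (g k η) 0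
      rwa [max_eq_left (hFpos η)] at h2
    calc ENNReal.ofReal |F η - G k η| ≤ ENNReal.ofReal |F η - g k η| :=
          ENNReal.ofReal_le_ofReal h1
      _ = ‖F η - g k η‖₊ := (Real.enorm_eq_ofReal_abs _).symm
  -- uniform comparison of Riesz potentials
  have hCD : ∀ k, Cβ * (∫⁻ η, ENNReal.ofReal |F η - G k η| ∂μ) ≤
      ENNReal.ofReal (2 ^ (α - n) * δ k) := by
    intro k
    rw [ENNReal.ofReal_mul (Real.rpow_nonneg (by norm_num) _)]
    exact mul_le_mul_right (hDk k) _
  have hcompFG : ∀ k ξ, sphereRiesz n α F ξ ≤ sphereRiesz n α (G k) ξ +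
      ENNReal.ofReal (2 ^ (α - n) * δ k) := fun k ξ =>
    le_trans (riesz_le_add hβ (hGmeas k) ξ) (add_le_add_right (hCD k) _)
  have hcompGF : ∀ k ξ, sphereRiesz n α (G k) ξ ≤ sphereRiesz n α F ξ +
      ENNReal.ofReal (2 ^ (α - n) * δ k) := by
    intro k ξ
    refine le_trans (riesz_le_add hβ hF ξ) (add_le_add_right (le_trans (le_of_eq ?_) (hCD k)) _)
    congr 1
    exact lintegral_congr fun η => by rw [abs_sub_comm]
  have hGfin : ∀ k ξ, sphereRiesz n α (G k) ξ ≠ ⊤ := fun k ξ =>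
    ne_top_of_le_ne_top (ENNReal.add_ne_top.2 ⟨hFfin ξ, ENNReal.ofReal_ne_top⟩) (hcompGF k ξ)
  set hK : ℕ → sphere (0 : EuclideanSpace ℝ (Fin (n + 1))) 1 → ℝ :=
    fun k ξ => (sphereRiesz n α (G k) ξ).toReal with hKdef
  have habs : ∀ k ξ, |hK k ξ - h ξ| ≤ 2 ^ (α - n) * δ k := by
    intro k ξ
    have e0 : 0 ≤ 2 ^ (α - n) * δ k := by
      have := (hδ0 k).le
      positivity
    rw [abs_sub_le_iff]
    constructor
    · have h1 := ENNReal.toReal_mono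
        (ENNReal.add_ne_top.2 ⟨hFfin ξ, ENNReal.ofReal_ne_top⟩) (hcompGF k ξ)
      rw [ENNReal.toReal_add (hFfin ξ) ENNReal.ofReal_ne_top, ENNReal.toReal_ofReal e0] at h1
      linarith
    · have h1 := ENNReal.toReal_mono
        (ENNReal.add_ne_top.2 ⟨hGfin k ξ, ENNReal.ofReal_ne_top⟩) (hcompFG k ξ)
      rw [ENNReal.toReal_add (hGfin k ξ) ENNReal.ofReal_ne_top, ENNReal.toReal_ofReal e0] at h1
      linarith
  have herrlim : Tendsto (fun k => 2 ^ (α - n) * δ k) atTop (𝓝 0) := by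
    have h1 := hδlim.const_mul (2 ^ (α - n) : ℝ)
    rw [mul_zero] at h1
    exact h1
  have hptlim : ∀ ξ, Tendsto (fun k => hK k ξ) atTop (𝓝 (h ξ)) := by
    intro ξ
    rw [tendsto_iff_dist_tendsto_zero]
    refine squeeze_zero (fun k => dist_nonneg) (fun k => ?_) herrlim
    rw [Real.dist_eq]
    exact habs k ξ
  obtain ⟨K0, hK0⟩ : ∃ K0 : ℕ, ∀ k ≥ K0, 2 ^ (α - n) * δ k ≤ mr/2 := by
    have h2 : ∀ᶠ k in atTop, 2 ^ (α - n) * δ k < mr/2 :=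
      herrlim.eventually (gt_mem_nhds (by positivity))
    obtain ⟨K0, hK0⟩ := eventually_atTop.1 h2
    exact ⟨K0, fun k hk => (hK0 k hk).le⟩
  have hKlb : ∀ k ≥ K0, ∀ ξ, mr/2 ≤ hK k ξ := by
    intro k hk ξ
    have h1 := (abs_sub_le_iff.1 (habs k ξ)).2
    have h2 := hhlb ξ
    have h3 := hK0 k hk
    linarith
  -- rewrite the q-integrals in real terms
  have hrw : ∀ X : ℝ≥0∞, X ≠ 0 → X ≠ ⊤ → X ^ q = ENNReal.ofReal (X.toReal ^ q) := by
    intro X h0 htop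
    rw [← ENNReal.ofReal_rpow_of_pos (ENNReal.toReal_pos h0 htop), ENNReal.ofReal_toReal htop]
  set B : ℝ≥0∞ := ∫⁻ ξ, (sphereRiesz n α F ξ) ^ q ∂μ with hBdef
  have hBeq : B = ∫⁻ ξ, ENNReal.ofReal (h ξ ^ q) ∂μ :=
    lintegral_congr fun ξ => hrw _ (riesz_pos hn hβ hF hFpos hFne ξ).ne' (hFfin ξ)
  set Bk : ℕ → ℝ≥0∞ := fun k => ∫⁻ ξ, (sphereRiesz n α (G k) ξ) ^ q ∂μ with hBkdef
  have hBkeq : ∀ k ≥ K0, Bk k = ∫⁻ ξ, ENNReal.ofReal (hK k ξ ^ q) ∂μ := by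
    intro k hk
    refine lintegral_congr fun ξ => hrw _ ?_ (hGfin k ξ)
    intro h0
    have := hKlb k hk ξ
    rw [hKdef] at this
    simp only [h0, ENNReal.toReal_zero] at this
    linarith
  have hDCT : Tendsto (fun k => ∫⁻ ξ, ENNReal.ofReal (hK k ξ ^ q) ∂μ) atTop
      (𝓝 (∫⁻ ξ, ENNReal.ofReal (h ξ ^ q) ∂μ)) := by
    refine tendsto_lintegral_filter_of_dominated_convergence
      (fun _ => ENNReal.ofReal ((mr/2) ^ q)) ?_ ?_ ?_ ?_
    · refine Eventually.of_forall fun k => ?_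
      exact ((meas_rpow (riesz_measurable (hGmeas k)).ennreal_toReal q)).ennreal_ofReal
    · filter_upwards [eventually_ge_atTop K0] with k hk
      refine Eventually.of_forall fun ξ => ENNReal.ofReal_le_ofReal ?_
      exact Real.rpow_le_rpow_of_nonpos (by positivity) (hKlb k hk ξ) hq0.le
    · rw [lintegral_const]
      exact ENNReal.mul_ne_top ENNReal.ofReal_ne_top hVtop
    · refine Eventually.of_forall fun ξ => ?_
      have hne0 : h ξ ≠ 0 := by have := hhlb ξ; intro h0; rw [h0] at this; linarith
      have h1 : ContinuousAt (fun x : ℝ => x ^ q) (h ξ) :=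
        Real.continuousAt_rpow_const _ _ (Or.inl hne0)
      exact (ENNReal.continuous_ofReal.continuousAt.tendsto).comp
        (h1.tendsto.comp (hptlim ξ))
  have hBklim : Tendsto Bk atTop (𝓝 B) := by
    rw [hBeq]
    refine hDCT.congr' ?_
    filter_upwards [eventually_ge_atTop K0] with k hk
    exact (hBkeq k hk).symm
  have hB0 : B ≠ 0 := by
    rw [hBeq]
    intro hB
    have hlb : ENNReal.ofReal (MR ^ q) * μ Set.univ ≤ ∫⁻ ξ, ENNReal.ofReal (h ξ ^ q) ∂μ := by
      rw [← lintegral_const]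
      refine lintegral_mono fun ξ => ENNReal.ofReal_le_ofReal ?_
      have h1 : 0 < h ξ := lt_of_lt_of_le hmr0 (hhlb ξ)
      exact Real.rpow_le_rpow_of_nonpos h1 (hhub ξ) hq0.le
    rw [hB] at hlb
    have h2 : 0 < ENNReal.ofReal (MR ^ q) * μ Set.univ :=
      ENNReal.mul_pos (ENNReal.ofReal_pos.2 (Real.rpow_pos_of_pos hMR0 _)).ne' hV0.ne'
    exact absurd (le_antisymm hlb zero_le) h2.ne'
  have hBtop : B ≠ ⊤ := by
    rw [hBeq]
    have hle : (∫⁻ ξ, ENNReal.ofReal (h ξ ^ q) ∂μ) ≤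
        ∫⁻ _, ENNReal.ofReal (mr ^ q) ∂μ :=
      lintegral_mono fun ξ => ENNReal.ofReal_le_ofReal
        (Real.rpow_le_rpow_of_nonpos hmr0 (hhlb ξ) hq0.le)
    refine ne_top_of_le_ne_top ?_ hle
    rw [lintegral_const]
    exact ENNReal.mul_ne_top ENNReal.ofReal_ne_top hVtop
  have hBr0 : 0 < B.toReal := ENNReal.toReal_pos hB0 hBtop
  have hAk : Tendsto (fun k => ((Bk k) ^ (1/q)).toReal) atTop (𝓝 ((B ^ (1/q)).toReal)) := by
    have h1 : Tendsto (fun k => (Bk k).toReal) atTop (𝓝 B.toReal) :=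
      (ENNReal.tendsto_toReal hBtop).comp hBklim
    have h2 : Tendsto (fun k => (Bk k).toReal ^ (1/q)) atTop (𝓝 (B.toReal ^ (1/q))) :=
      ((Real.continuousAt_rpow_const _ _ (Or.inl hBr0.ne')).tendsto).comp h1
    simpa only [ENNReal.toReal_rpow] using h2
  -- the Lᵖ term
  set T : ℕ → ℝ := fun k => (∫ ξ, |F ξ - G k ξ| ^ p ∂μ) ^ (1/p) with hTdef
  have hT0 : ∀ k, 0 ≤ T k := fun k =>
    Real.rpow_nonneg (integral_nonneg fun ξ => Real.rpow_nonneg (abs_nonneg _) _) _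
  have hTk : ∀ k, T k ≤ ((δ k) ^ p * ((μ Set.univ).toReal) ^ (1-p)) ^ (1/p) := by
    intro k
    set u : sphere (0 : EuclideanSpace ℝ (Fin (n + 1))) 1 → ℝ≥0∞ :=
      fun ξ => ENNReal.ofReal |F ξ - G k ξ| with hudef
    have humeas : Measurable u := ((hF.sub (hGmeas k)).abs).ennreal_ofReal
    have hieq : ∫ ξ, |F ξ - G k ξ| ^ p ∂μ = (∫⁻ ξ, (u ξ) ^ p ∂μ).toReal := by
      rw [integral_eq_lintegral_of_nonneg_ae
        (Eventually.of_forall fun ξ => Real.rpow_nonneg (abs_nonneg _) _)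
        ((meas_rpow (f := fun ξ => |F ξ - G k ξ|) (hF.sub (hGmeas k)).abs p).aestronglyMeasurable)]
      congr 1
      exact lintegral_congr fun ξ =>
        (ENNReal.ofReal_rpow_of_nonneg (abs_nonneg _) hp0.le).symm
    have hH : ∫⁻ ξ, (u ξ) ^ p ∂μ ≤ (∫⁻ ξ, u ξ ∂μ) ^ p * (μ Set.univ) ^ (1-p) := by
      have hconj : (1/p).HolderConjugate (1/(1-p)) := by
        rw [Real.holderConjugate_iff]
        constructor
        · rw [lt_div_iff₀ hp0]; linarith
        · rw [one_div, one_div, inv_inv, inv_inv]; ring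
      have hHo := ENNReal.lintegral_mul_le_Lp_mul_Lq μ hconj
        ((humeas.pow_const p).aemeasurable) (aemeasurable_const (b := (1:ℝ≥0∞)))
      simp only [Pi.mul_apply, mul_one, ENNReal.one_rpow, lintegral_const, one_mul] at hHo
      calc ∫⁻ ξ, (u ξ) ^ p ∂μ
          ≤ (∫⁻ ξ, ((u ξ) ^ p) ^ (1/p) ∂μ) ^ (1/(1/p)) *
            (μ Set.univ) ^ (1/(1/(1-p))) := hHo
        _ = (∫⁻ ξ, u ξ ∂μ) ^ p * (μ Set.univ) ^ (1-p) := by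
            rw [one_div_one_div, one_div_one_div]
            congr 2
            refine lintegral_congr fun ξ => ?_
            rw [← ENNReal.rpow_mul, mul_one_div_cancel hp0.ne', ENNReal.rpow_one]
    have hfin : ((ENNReal.ofReal (δ k)) ^ p * (μ Set.univ) ^ (1-p)) ≠ ⊤ :=
      ENNReal.mul_ne_top (ENNReal.rpow_ne_top_of_nonneg hp0.le ENNReal.ofReal_ne_top)
        (ENNReal.rpow_ne_top_of_nonneg (by linarith) hVtop)
    have hle : (∫⁻ ξ, (u ξ) ^ p ∂μ) ≤ (ENNReal.ofReal (δ k)) ^ p * (μ Set.univ) ^ (1-p) :=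
      le_trans hH (mul_le_mul_left (ENNReal.rpow_le_rpow (hDk k) hp0.le) _)
    have hto : (∫⁻ ξ, (u ξ) ^ p ∂μ).toReal ≤ (δ k) ^ p * ((μ Set.univ).toReal) ^ (1-p) := by
      have := ENNReal.toReal_mono hfin hle
      rwa [ENNReal.toReal_mul, ← ENNReal.toReal_rpow, ← ENNReal.toReal_rpow,
        ENNReal.toReal_ofReal (hδ0 k).le] at this
    rw [hTdef]
    simp only
    rw [hieq]
    exact Real.rpow_le_rpow ENNReal.toReal_nonneg hto (by positivity)
  have hTlim : Tendsto T atTop (𝓝 0) := by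
    have hb1 : Tendsto (fun k => (δ k) ^ p) atTop (𝓝 0) := by
      have h1 : ContinuousAt (fun x : ℝ => x ^ p) 0 :=
        Real.continuousAt_rpow_const _ _ (Or.inr hp0.le)
      have h2 := h1.tendsto.comp hδlim
      simpa [Function.comp_def, Real.zero_rpow hp0.ne'] using h2
    have hb2 : Tendsto (fun k => (δ k) ^ p * ((μ Set.univ).toReal) ^ (1-p)) atTop (𝓝 0) := by
      simpa using hb1.mul_const (((μ Set.univ).toReal) ^ (1-p))
    have hb3 : Tendsto (fun k => ((δ k) ^ p * ((μ Set.univ).toReal) ^ (1-p)) ^ (1/p)) atTop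
        (𝓝 0) := by
      have h1 : ContinuousAt (fun x : ℝ => x ^ (1/p)) 0 :=
        Real.continuousAt_rpow_const _ _ (Or.inr (by positivity))
      have h2 := h1.tendsto.comp hb2
      simpa [Function.comp_def, Real.zero_rpow (by positivity : (p⁻¹:ℝ) ≠ 0)] using h2
    exact squeeze_zero hT0 hTk hb3
  -- put everything together
  set A : ℝ := ((B) ^ (1/q)).toReal with hAdef
  have habslim : Tendsto (fun k => |A - ((Bk k) ^ (1/q)).toReal|) atTop (𝓝 0) := by
    have h1 := (tendsto_const_nhds (x := A) (f := atTop)).sub hAk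
    have h2 := h1.abs
    simpa using h2
  have hsum : Tendsto (fun k => T k + |A - ((Bk k) ^ (1/q)).toReal|) atTop (𝓝 0) := by
    simpa using hTlim.add habslim
  have hev : ∀ᶠ k in atTop, T k + |A - ((Bk k) ^ (1/q)).toReal| < ε :=
    hsum.eventually (gt_mem_nhds hε)
  obtain ⟨k, hk⟩ := hev.exists
  exact ⟨G k, hGcont k, hGpos k, hk⟩
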